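/- Mathias' block-triangular identity: for square matrices X, E of the same size, the matrix exponential of the block matrix [[X, E],[0, X]] equals [[exp(X), L],[0, exp(X)]] where L = ∫₀¹ exp((1−s)X) E exp(sX) ds is the Fréchet derivative of exp at X in direction E; in particular the two diagonal blocks of the exponential are both exp(X). -/

import Mathlib

open Matrix NormedSpace

attribute [local instance] Matrix.linftyOpNormedAddCommGroup Matrix.linftyOpNormedSpace
  Matrix.linftyOpNormedRing Matrix.linftyOpNormedAlgebra

namespace Stmt15Aux

/-- Entry-evaluation as a continuous linear map. -/
noncomputable def entryCLM {m : Type*} [Fintype m] [DecidableEq m] (i j : m) :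
    Matrix m m ℝ →L[ℝ] ℝ :=
  LinearMap.toContinuousLinearMap
    { toFun := fun M => M i j
      map_add' := fun _ _ => rfl
      map_smul' := fun _ _ => rfl }

@[simp] lemma entryCLM_apply {m : Type*} [Fintype m] [DecidableEq m] (i j : m)
    (M : Matrix m m ℝ) : entryCLM i j M = M i j := rfl

lemma entry_exp {m : Type*} [Fintype m] [DecidableEq m] (A : Matrix m m ℝ) (i j : m) :
    exp A i j = ∑' (k : ℕ), (Nat.factorial k : ℝ)⁻¹ • (A ^ k) i j := by
  rw [exp_eq_tsum ℝ]
  have := ((entryCLM i j).map_tsum (expSeries_summable' (𝕂 := ℝ) A))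
  simpa [Matrix.smul_apply] using this

variable {n : ℕ}

lemma pow_upper (X E : Matrix (Fin n) (Fin n) ℝ) (k : ℕ) :
    ∃ D, (Matrix.fromBlocks X E 0 X) ^ k = Matrix.fromBlocks (X ^ k) D 0 (X ^ k) := by
  induction k with
  | zero => exact ⟨0, by simp [← Matrix.fromBlocks_one]⟩
  | succ k ih =>
    obtain ⟨D, hD⟩ := ih
    refine ⟨X ^ k * E + D * X, ?_⟩
    rw [pow_succ, hD, pow_succ, Matrix.fromBlocks_multiply]
    simp

lemma exp_upper (X E : Matrix (Fin n) (Fin n) ℝ) :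
    ∃ W, exp (Matrix.fromBlocks X E 0 X) =
      Matrix.fromBlocks (exp X) W 0 (exp X) := by
  refine ⟨(exp (Matrix.fromBlocks X E 0 X)).toBlocks₁₂, ?_⟩
  ext (i | i) (j | j)
  · rw [Matrix.fromBlocks_apply₁₁, entry_exp, entry_exp]
    refine tsum_congr fun k => ?_
    obtain ⟨D, hD⟩ := pow_upper X E k
    rw [hD, Matrix.fromBlocks_apply₁₁]
  · rw [Matrix.fromBlocks_apply₁₂]; rfl
  · rw [Matrix.fromBlocks_apply₂₁, entry_exp]
    have : ∀ k : ℕ, (Nat.factorial k : ℝ)⁻¹ • ((Matrix.fromBlocks X E 0 X ^ k) (Sum.inr i) (Sum.inl j)) = 0 := by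
      intro k
      obtain ⟨D, hD⟩ := pow_upper X E k
      rw [hD, Matrix.fromBlocks_apply₂₁]
      simp
    simp only [this, tsum_zero]
    rfl
  · rw [Matrix.fromBlocks_apply₂₂, entry_exp, entry_exp]
    refine tsum_congr fun k => ?_
    obtain ⟨D, hD⟩ := pow_upper X E k
    rw [hD, Matrix.fromBlocks_apply₂₂]

lemma pow_diag (X Y : Matrix (Fin n) (Fin n) ℝ) (k : ℕ) :
    (Matrix.fromBlocks X 0 0 Y) ^ k = Matrix.fromBlocks (X ^ k) 0 0 (Y ^ k) := by
  induction k with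
  | zero => simp [← Matrix.fromBlocks_one]
  | succ k ih => rw [pow_succ, ih, pow_succ, pow_succ, Matrix.fromBlocks_multiply]; simp

lemma exp_diag (X Y : Matrix (Fin n) (Fin n) ℝ) :
    exp (Matrix.fromBlocks X 0 0 Y) =
      Matrix.fromBlocks (exp X) 0 0 (exp Y) := by
  ext (i | i) (j | j)
  · rw [Matrix.fromBlocks_apply₁₁, entry_exp, entry_exp]
    exact tsum_congr fun k => by rw [pow_diag, Matrix.fromBlocks_apply₁₁]
  · rw [Matrix.fromBlocks_apply₁₂, entry_exp]
    simp only [pow_diag, Matrix.fromBlocks_apply₁₂, Matrix.zero_apply, smul_zero, tsum_zero]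
  · rw [Matrix.fromBlocks_apply₂₁, entry_exp]
    simp only [pow_diag, Matrix.fromBlocks_apply₂₁, Matrix.zero_apply, smul_zero, tsum_zero]
  · rw [Matrix.fromBlocks_apply₂₂, entry_exp, entry_exp]
    exact tsum_congr fun k => by rw [pow_diag, Matrix.fromBlocks_apply₂₂]

end Stmt15Aux

open Stmt15Aux

/-- Mathias' block-triangular identity: exp [[X,E],[0,X]] = [[exp X, L],[0, exp X]],
where L = ∫₀¹ exp((1−s)X) E exp(sX) ds is the Fréchet derivative of exp at X in
direction E (in particular both diagonal blocks equal exp X). -/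
theorem stmt_15 (n : ℕ) (X E : Matrix (Fin n) (Fin n) ℝ) :
    exp (Matrix.fromBlocks X E 0 X) =
      Matrix.fromBlocks (exp X)
        (Matrix.of fun i j =>
          ∫ s in (0:ℝ)..1, (exp ((1 - s) • X) * E * exp (s • X)) i j)
        0 (exp X) := by
  set A : Matrix (Fin n ⊕ Fin n) (Fin n ⊕ Fin n) ℝ := Matrix.fromBlocks X E 0 X with hA
  set B : Matrix (Fin n ⊕ Fin n) (Fin n ⊕ Fin n) ℝ := Matrix.fromBlocks X 0 0 X with hB
  -- block description of exp of scalar multiples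
  have hsB : ∀ t : ℝ, exp (t • B) =
      Matrix.fromBlocks (exp (t • X)) 0 0 (exp (t • X)) := by
    intro t
    rw [hB, Matrix.fromBlocks_smul, smul_zero, exp_diag]
  have hsA : ∀ t : ℝ, ∃ W, exp (t • A) =
      Matrix.fromBlocks (exp (t • X)) W 0 (exp (t • X)) := by
    intro t
    rw [hA, Matrix.fromBlocks_smul, smul_zero]
    exact exp_upper _ _
  have hAB : A - B = Matrix.fromBlocks 0 E 0 0 := by
    rw [hA, hB]
    ext (i | i) (j | j) <;>
      simp [Matrix.sub_apply]
  -- the integrand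
  set F : ℝ → Matrix (Fin n ⊕ Fin n) (Fin n ⊕ Fin n) ℝ :=
    fun s => exp ((1 - s) • B) * ((A - B) * exp (s • A)) with hF
  have hFblocks : ∀ s : ℝ, F s =
      Matrix.fromBlocks 0 (exp ((1 - s) • X) * E * exp (s • X)) 0 0 := by
    intro s
    obtain ⟨W, hW⟩ := hsA s
    rw [hF]
    simp only
    rw [hW, hsB (1 - s), hAB, Matrix.fromBlocks_multiply, Matrix.fromBlocks_multiply]
    simp [mul_assoc]
  -- continuity of the integrand
  have hcont : Continuous F := by
    apply Continuous.mul
    · exact exp_continuous.comp ((continuous_const.sub continuous_id).smul continuous_const)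
    · exact continuous_const.mul
        (exp_continuous.comp (continuous_id.smul continuous_const))
  have hint : @IntervalIntegrable _ PseudoMetricSpace.toUniformSpace.toTopologicalSpace _ F MeasureTheory.volume 0 1 :=
    hcont.intervalIntegrable 0 1
  -- the fundamental theorem of calculus
  have hderiv : ∀ s ∈ Set.uIcc (0 : ℝ) 1,
      HasDerivAt (fun t : ℝ => exp ((1 - t) • B) * exp (t • A)) (F s) s := by
    intro s _
    have h1 : HasDerivAt (fun t : ℝ => exp (t • B)) (exp ((1 - s) • B) * B) (1 - s) :=
      hasDerivAt_exp_smul_const B (1 - s)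
    have h2 : HasDerivAt (fun t : ℝ => 1 - t) (-1 : ℝ) s := by
      simpa using (hasDerivAt_id s).const_sub 1
    have h3 : HasDerivAt (fun t : ℝ => exp ((1 - t) • B))
        ((-1 : ℝ) • (exp ((1 - s) • B) * B)) s := HasDerivAt.scomp s h1 h2
    have h4 : HasDerivAt (fun t : ℝ => exp (t • A)) (A * exp (s • A)) s :=
      hasDerivAt_exp_smul_const' A s
    have h5 := h3.mul h4
    convert h5 using 1
    · rfl
    · rfl
    · rfl
    · rfl
    rw [hF]
    simp only [neg_one_smul, neg_mul]
    rw [sub_mul, mul_sub]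
    rw [mul_assoc]
    abel
  have hFTC : ∫ s in (0:ℝ)..1, F s = exp A - exp B := by
    rw [intervalIntegral.integral_eq_sub_of_hasDerivAt hderiv hint]
    norm_num
  -- exp of A and B as blocks
  obtain ⟨W, hW⟩ := exp_upper X E
  have hexpB : exp B = Matrix.fromBlocks (exp X) 0 0 (exp X) := by
    simpa using hsB 1
  rw [← hA] at hW
  -- assemble, entrywise
  have hWeq : W = Matrix.of (fun i j =>
      ∫ s in (0:ℝ)..1, (exp ((1 - s) • X) * E * exp (s • X)) i j) := by
    ext i j
    have hent := (entryCLM (Sum.inl i : Fin n ⊕ Fin n) (Sum.inr j)).intervalIntegral_comp_comm hint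
    rw [hFTC] at hent
    change ∫ x in (0:ℝ)..1, F x (Sum.inl i) (Sum.inr j) = (exp A - exp B) (Sum.inl i) (Sum.inr j) at hent
    have hFe : ∀ s : ℝ, F s (Sum.inl i) (Sum.inr j) =
        (exp ((1 - s) • X) * E * exp (s • X)) i j := fun s => by
      rw [hFblocks s, Matrix.fromBlocks_apply₁₂]
    simp only [hFe] at hent
    rw [Matrix.of_apply, hent, Matrix.sub_apply, hW, hexpB,
      Matrix.fromBlocks_apply₁₂, Matrix.fromBlocks_apply₁₂, Matrix.zero_apply, sub_zero]
  rw [hW, hWeq]
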